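/- Let R be the quaternionic contact curvature of a qc manifold of dimension 4n+3, n > 1, with torsion tensors T⁰, U and normalized scalar curvature S, assumed to satisfy identity (comp1): 3R(X,Y,Z,V) − Σ_α R(I_αX, I_αY, Z, V) equals the explicit right-hand side involving T⁰, U, S of equation (comp1), together with the first Bianchi identity (bian01). Then for every unit horizontal vector X: Σ_{α=1}^3 R(X, I_αX, I_αX, X) = 2T⁰(X,X) + 18U(X,X) + 6S. -/

import Mathlib

open scoped RealInnerProductSpace

set_option maxHeartbeats 4000000 in
theorem stmt_17 {H : Type*} [NormedAddCommGroup H] [InnerProductSpace ℝ H]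
    [FiniteDimensional ℝ H] (n : ℕ) (hn : 1 < n) (hdim : Module.finrank ℝ H = 4 * n)
    (I : Fin 3 → H →ₗ[ℝ] H)
    (hiso : ∀ α (X Y : H), ⟪I α X, I α Y⟫ = ⟪X, Y⟫)
    (h12 : I 0 ∘ₗ I 1 = I 2) (h23 : I 1 ∘ₗ I 2 = I 0) (h31 : I 2 ∘ₗ I 0 = I 1)
    (hsq : ∀ α, I α ∘ₗ I α = -LinearMap.id)
    (hskew : ∀ α (Y : H), ⟪I α Y, Y⟫ = 0)
    (T0 U : H →ₗ[ℝ] H →ₗ[ℝ] ℝ) (S : ℝ)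
    (hT0sym : ∀ X Y, T0 X Y = T0 Y X)
    (hT0inv : ∀ X Y, T0 X Y + ∑ α, T0 (I α X) (I α Y) = 0)
    (hUsym : ∀ X Y, U X Y = U Y X)
    (hUinv : ∀ α X Y, U (I α X) (I α Y) = U X Y)
    (R : H →ₗ[ℝ] H →ₗ[ℝ] H →ₗ[ℝ] H →ₗ[ℝ] ℝ)
    (hcomp1 : ∀ X Y Z W : H,
      3 * R X Y Z W - ∑ α, R (I α X) (I α Y) Z W =
      2 * (⟪Y, Z⟫ * T0 X W + ⟪X, W⟫ * T0 Z Y - ⟪Z, X⟫ * T0 Y W - ⟪W, Y⟫ * T0 Z X)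
      - 2 * ∑ α, (⟪I α Y, Z⟫ * T0 X (I α W) + ⟪I α X, W⟫ * T0 Z (I α Y)
          - ⟪I α Z, X⟫ * T0 Y (I α W) - ⟪I α W, Y⟫ * T0 Z (I α X))
      + ∑ α, (2 * ⟪I α X, Y⟫ * (T0 Z (I α W) - T0 (I α Z) W)
          - 8 * ⟪I α Z, W⟫ * U (I α X) Y - 4 * S * ⟪I α X, Y⟫ * ⟪I α Z, W⟫))
    (hBianchi : ∀ X Y Z W : H,
      R X Y Z W + R Y Z X W + R Z X Y W =
      2 * ∑ α, (⟪I α X, Y⟫ * (-(1/4) * (T0 (I α Z) W + T0 Z (I α W)) + U (I α Z) W)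
        + ⟪I α Y, Z⟫ * (-(1/4) * (T0 (I α X) W + T0 X (I α W)) + U (I α X) W)
        + ⟪I α Z, X⟫ * (-(1/4) * (T0 (I α Y) W + T0 Y (I α W)) + U (I α Y) W)))
    (X : H) (hX : ⟪X, X⟫ = 1) :
    ∑ α, R X (I α X) (I α X) X = 2 * T0 X X + 18 * U X X + 6 * S := by
  have hsq' : ∀ (α : Fin 3) (v : H), I α (I α v) = -v := by
    intro α v
    have := congrArg (fun f : H →ₗ[ℝ] H => f v) (hsq α)
    simpa using this
  have c01 : ∀ v : H, I 0 (I 1 v) = I 2 v := by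
    intro v; exact congrArg (fun f : H →ₗ[ℝ] H => f v) h12
  have c12 : ∀ v : H, I 1 (I 2 v) = I 0 v := by
    intro v; exact congrArg (fun f : H →ₗ[ℝ] H => f v) h23
  have c20 : ∀ v : H, I 2 (I 0 v) = I 1 v := by
    intro v; exact congrArg (fun f : H →ₗ[ℝ] H => f v) h31
  have c10 : ∀ v : H, I 1 (I 0 v) = -(I 2 v) := by
    intro v; rw [← c12 v, hsq']
  have c21 : ∀ v : H, I 2 (I 1 v) = -(I 0 v) := by
    intro v; rw [← c20 v, hsq']
  have c02 : ∀ v : H, I 0 (I 2 v) = -(I 1 v) := by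
    intro v; rw [← c01 v, hsq']
  have i00 : ⟪I 0 X, I 0 X⟫ = 1 := by rw [hiso]; exact hX
  have i11 : ⟪I 1 X, I 1 X⟫ = 1 := by rw [hiso]; exact hX
  have i22 : ⟪I 2 X, I 2 X⟫ = 1 := by rw [hiso]; exact hX
  have i0X : ⟪I 0 X, X⟫ = 0 := hskew 0 X
  have i1X : ⟪I 1 X, X⟫ = 0 := hskew 1 X
  have i2X : ⟪I 2 X, X⟫ = 0 := hskew 2 X
  have iX0 : ⟪X, I 0 X⟫ = 0 := by rw [real_inner_comm]; exact i0X
  have iX1 : ⟪X, I 1 X⟫ = 0 := by rw [real_inner_comm]; exact i1X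
  have iX2 : ⟪X, I 2 X⟫ = 0 := by rw [real_inner_comm]; exact i2X
  have i01 : ⟪I 0 X, I 1 X⟫ = 0 := by
    have h := hiso 2 (I 0 X) (I 1 X)
    rw [c20, c21, inner_neg_right] at h
    have := real_inner_comm (I 1 X) (I 0 X)
    linarith
  have i02 : ⟪I 0 X, I 2 X⟫ = 0 := by
    have h := hiso 1 (I 0 X) (I 2 X)
    rw [c10, c12, inner_neg_left] at h
    have := real_inner_comm (I 2 X) (I 0 X)
    linarith
  have i12 : ⟪I 1 X, I 2 X⟫ = 0 := by
    have h := hiso 0 (I 1 X) (I 2 X)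
    rw [c01, c02, inner_neg_right] at h
    have := real_inner_comm (I 2 X) (I 1 X)
    linarith
  have i10 : ⟪I 1 X, I 0 X⟫ = 0 := by rw [real_inner_comm]; exact i01
  have i20 : ⟪I 2 X, I 0 X⟫ = 0 := by rw [real_inner_comm]; exact i02
  have i21 : ⟪I 2 X, I 1 X⟫ = 0 := by rw [real_inner_comm]; exact i12
  have C0 := hcomp1 X X X X
  simp only [Fin.sum_univ_three, hsq', c01, c02, c10, c12, c20, c21, map_neg,
    LinearMap.neg_apply, inner_neg_left, inner_neg_right, neg_neg, hX, i00, i11, i22,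
    i01, i10, i02, i20, i12, i21, iX0, iX1, iX2, i0X, i1X, i2X,
    mul_one, mul_zero, zero_mul, one_mul, neg_zero, add_zero, zero_add, sub_zero,
    zero_sub, mul_neg, neg_mul, sub_neg_eq_add] at C0
  have C1 := hcomp1 X (I 0 X) X (I 0 X)
  simp only [Fin.sum_univ_three, hsq', c01, c02, c10, c12, c20, c21, map_neg,
    LinearMap.neg_apply, inner_neg_left, inner_neg_right, neg_neg, hX, i00, i11, i22,
    i01, i10, i02, i20, i12, i21, iX0, iX1, iX2, i0X, i1X, i2X,
    mul_one, mul_zero, zero_mul, one_mul, neg_zero, add_zero, zero_add, sub_zero,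
    zero_sub, mul_neg, neg_mul, sub_neg_eq_add] at C1
  have C2 := hcomp1 X (I 0 X) (I 0 X) X
  simp only [Fin.sum_univ_three, hsq', c01, c02, c10, c12, c20, c21, map_neg,
    LinearMap.neg_apply, inner_neg_left, inner_neg_right, neg_neg, hX, i00, i11, i22,
    i01, i10, i02, i20, i12, i21, iX0, iX1, iX2, i0X, i1X, i2X,
    mul_one, mul_zero, zero_mul, one_mul, neg_zero, add_zero, zero_add, sub_zero,
    zero_sub, mul_neg, neg_mul, sub_neg_eq_add] at C2
  have C3 := hcomp1 X (I 1 X) X (I 1 X)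
  simp only [Fin.sum_univ_three, hsq', c01, c02, c10, c12, c20, c21, map_neg,
    LinearMap.neg_apply, inner_neg_left, inner_neg_right, neg_neg, hX, i00, i11, i22,
    i01, i10, i02, i20, i12, i21, iX0, iX1, iX2, i0X, i1X, i2X,
    mul_one, mul_zero, zero_mul, one_mul, neg_zero, add_zero, zero_add, sub_zero,
    zero_sub, mul_neg, neg_mul, sub_neg_eq_add] at C3
  have C4 := hcomp1 X (I 1 X) (I 1 X) X
  simp only [Fin.sum_univ_three, hsq', c01, c02, c10, c12, c20, c21, map_neg,
    LinearMap.neg_apply, inner_neg_left, inner_neg_right, neg_neg, hX, i00, i11, i22,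
    i01, i10, i02, i20, i12, i21, iX0, iX1, iX2, i0X, i1X, i2X,
    mul_one, mul_zero, zero_mul, one_mul, neg_zero, add_zero, zero_add, sub_zero,
    zero_sub, mul_neg, neg_mul, sub_neg_eq_add] at C4
  have C5 := hcomp1 X (I 2 X) X (I 2 X)
  simp only [Fin.sum_univ_three, hsq', c01, c02, c10, c12, c20, c21, map_neg,
    LinearMap.neg_apply, inner_neg_left, inner_neg_right, neg_neg, hX, i00, i11, i22,
    i01, i10, i02, i20, i12, i21, iX0, iX1, iX2, i0X, i1X, i2X,
    mul_one, mul_zero, zero_mul, one_mul, neg_zero, add_zero, zero_add, sub_zero,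
    zero_sub, mul_neg, neg_mul, sub_neg_eq_add] at C5
  have C6 := hcomp1 X (I 2 X) (I 0 X) (I 1 X)
  simp only [Fin.sum_univ_three, hsq', c01, c02, c10, c12, c20, c21, map_neg,
    LinearMap.neg_apply, inner_neg_left, inner_neg_right, neg_neg, hX, i00, i11, i22,
    i01, i10, i02, i20, i12, i21, iX0, iX1, iX2, i0X, i1X, i2X,
    mul_one, mul_zero, zero_mul, one_mul, neg_zero, add_zero, zero_add, sub_zero,
    zero_sub, mul_neg, neg_mul, sub_neg_eq_add] at C6
  have C7 := hcomp1 X (I 2 X) (I 2 X) X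
  simp only [Fin.sum_univ_three, hsq', c01, c02, c10, c12, c20, c21, map_neg,
    LinearMap.neg_apply, inner_neg_left, inner_neg_right, neg_neg, hX, i00, i11, i22,
    i01, i10, i02, i20, i12, i21, iX0, iX1, iX2, i0X, i1X, i2X,
    mul_one, mul_zero, zero_mul, one_mul, neg_zero, add_zero, zero_add, sub_zero,
    zero_sub, mul_neg, neg_mul, sub_neg_eq_add] at C7
  have C8 := hcomp1 (I 0 X) X X (I 0 X)
  simp only [Fin.sum_univ_three, hsq', c01, c02, c10, c12, c20, c21, map_neg,
    LinearMap.neg_apply, inner_neg_left, inner_neg_right, neg_neg, hX, i00, i11, i22,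
    i01, i10, i02, i20, i12, i21, iX0, iX1, iX2, i0X, i1X, i2X,
    mul_one, mul_zero, zero_mul, one_mul, neg_zero, add_zero, zero_add, sub_zero,
    zero_sub, mul_neg, neg_mul, sub_neg_eq_add] at C8
  have C9 := hcomp1 (I 0 X) (I 0 X) X X
  simp only [Fin.sum_univ_three, hsq', c01, c02, c10, c12, c20, c21, map_neg,
    LinearMap.neg_apply, inner_neg_left, inner_neg_right, neg_neg, hX, i00, i11, i22,
    i01, i10, i02, i20, i12, i21, iX0, iX1, iX2, i0X, i1X, i2X,
    mul_one, mul_zero, zero_mul, one_mul, neg_zero, add_zero, zero_add, sub_zero,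
    zero_sub, mul_neg, neg_mul, sub_neg_eq_add] at C9
  have C10 := hcomp1 (I 0 X) (I 1 X) X (I 2 X)
  simp only [Fin.sum_univ_three, hsq', c01, c02, c10, c12, c20, c21, map_neg,
    LinearMap.neg_apply, inner_neg_left, inner_neg_right, neg_neg, hX, i00, i11, i22,
    i01, i10, i02, i20, i12, i21, iX0, iX1, iX2, i0X, i1X, i2X,
    mul_one, mul_zero, zero_mul, one_mul, neg_zero, add_zero, zero_add, sub_zero,
    zero_sub, mul_neg, neg_mul, sub_neg_eq_add] at C10
  have C11 := hcomp1 (I 0 X) (I 1 X) (I 0 X) (I 1 X)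
  simp only [Fin.sum_univ_three, hsq', c01, c02, c10, c12, c20, c21, map_neg,
    LinearMap.neg_apply, inner_neg_left, inner_neg_right, neg_neg, hX, i00, i11, i22,
    i01, i10, i02, i20, i12, i21, iX0, iX1, iX2, i0X, i1X, i2X,
    mul_one, mul_zero, zero_mul, one_mul, neg_zero, add_zero, zero_add, sub_zero,
    zero_sub, mul_neg, neg_mul, sub_neg_eq_add] at C11
  have C12 := hcomp1 (I 0 X) (I 1 X) (I 2 X) X
  simp only [Fin.sum_univ_three, hsq', c01, c02, c10, c12, c20, c21, map_neg,
    LinearMap.neg_apply, inner_neg_left, inner_neg_right, neg_neg, hX, i00, i11, i22,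
    i01, i10, i02, i20, i12, i21, iX0, iX1, iX2, i0X, i1X, i2X,
    mul_one, mul_zero, zero_mul, one_mul, neg_zero, add_zero, zero_add, sub_zero,
    zero_sub, mul_neg, neg_mul, sub_neg_eq_add] at C12
  have C13 := hcomp1 (I 0 X) (I 2 X) X (I 1 X)
  simp only [Fin.sum_univ_three, hsq', c01, c02, c10, c12, c20, c21, map_neg,
    LinearMap.neg_apply, inner_neg_left, inner_neg_right, neg_neg, hX, i00, i11, i22,
    i01, i10, i02, i20, i12, i21, iX0, iX1, iX2, i0X, i1X, i2X,
    mul_one, mul_zero, zero_mul, one_mul, neg_zero, add_zero, zero_add, sub_zero,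
    zero_sub, mul_neg, neg_mul, sub_neg_eq_add] at C13
  have C14 := hcomp1 (I 0 X) (I 2 X) (I 1 X) X
  simp only [Fin.sum_univ_three, hsq', c01, c02, c10, c12, c20, c21, map_neg,
    LinearMap.neg_apply, inner_neg_left, inner_neg_right, neg_neg, hX, i00, i11, i22,
    i01, i10, i02, i20, i12, i21, iX0, iX1, iX2, i0X, i1X, i2X,
    mul_one, mul_zero, zero_mul, one_mul, neg_zero, add_zero, zero_add, sub_zero,
    zero_sub, mul_neg, neg_mul, sub_neg_eq_add] at C14
  have C15 := hcomp1 (I 1 X) X X (I 1 X)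
  simp only [Fin.sum_univ_three, hsq', c01, c02, c10, c12, c20, c21, map_neg,
    LinearMap.neg_apply, inner_neg_left, inner_neg_right, neg_neg, hX, i00, i11, i22,
    i01, i10, i02, i20, i12, i21, iX0, iX1, iX2, i0X, i1X, i2X,
    mul_one, mul_zero, zero_mul, one_mul, neg_zero, add_zero, zero_add, sub_zero,
    zero_sub, mul_neg, neg_mul, sub_neg_eq_add] at C15
  have C16 := hcomp1 (I 1 X) X (I 1 X) X
  simp only [Fin.sum_univ_three, hsq', c01, c02, c10, c12, c20, c21, map_neg,
    LinearMap.neg_apply, inner_neg_left, inner_neg_right, neg_neg, hX, i00, i11, i22,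
    i01, i10, i02, i20, i12, i21, iX0, iX1, iX2, i0X, i1X, i2X,
    mul_one, mul_zero, zero_mul, one_mul, neg_zero, add_zero, zero_add, sub_zero,
    zero_sub, mul_neg, neg_mul, sub_neg_eq_add] at C16
  have C17 := hcomp1 (I 1 X) (I 0 X) X (I 2 X)
  simp only [Fin.sum_univ_three, hsq', c01, c02, c10, c12, c20, c21, map_neg,
    LinearMap.neg_apply, inner_neg_left, inner_neg_right, neg_neg, hX, i00, i11, i22,
    i01, i10, i02, i20, i12, i21, iX0, iX1, iX2, i0X, i1X, i2X,
    mul_one, mul_zero, zero_mul, one_mul, neg_zero, add_zero, zero_add, sub_zero,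
    zero_sub, mul_neg, neg_mul, sub_neg_eq_add] at C17
  have C18 := hcomp1 (I 1 X) (I 0 X) (I 0 X) (I 1 X)
  simp only [Fin.sum_univ_three, hsq', c01, c02, c10, c12, c20, c21, map_neg,
    LinearMap.neg_apply, inner_neg_left, inner_neg_right, neg_neg, hX, i00, i11, i22,
    i01, i10, i02, i20, i12, i21, iX0, iX1, iX2, i0X, i1X, i2X,
    mul_one, mul_zero, zero_mul, one_mul, neg_zero, add_zero, zero_add, sub_zero,
    zero_sub, mul_neg, neg_mul, sub_neg_eq_add] at C18
  have C19 := hcomp1 (I 1 X) (I 1 X) X X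
  simp only [Fin.sum_univ_three, hsq', c01, c02, c10, c12, c20, c21, map_neg,
    LinearMap.neg_apply, inner_neg_left, inner_neg_right, neg_neg, hX, i00, i11, i22,
    i01, i10, i02, i20, i12, i21, iX0, iX1, iX2, i0X, i1X, i2X,
    mul_one, mul_zero, zero_mul, one_mul, neg_zero, add_zero, zero_add, sub_zero,
    zero_sub, mul_neg, neg_mul, sub_neg_eq_add] at C19
  have C20 := hcomp1 (I 1 X) (I 2 X) X (I 0 X)
  simp only [Fin.sum_univ_three, hsq', c01, c02, c10, c12, c20, c21, map_neg,
    LinearMap.neg_apply, inner_neg_left, inner_neg_right, neg_neg, hX, i00, i11, i22,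
    i01, i10, i02, i20, i12, i21, iX0, iX1, iX2, i0X, i1X, i2X,
    mul_one, mul_zero, zero_mul, one_mul, neg_zero, add_zero, zero_add, sub_zero,
    zero_sub, mul_neg, neg_mul, sub_neg_eq_add] at C20
  have C21 := hcomp1 (I 1 X) (I 2 X) (I 0 X) X
  simp only [Fin.sum_univ_three, hsq', c01, c02, c10, c12, c20, c21, map_neg,
    LinearMap.neg_apply, inner_neg_left, inner_neg_right, neg_neg, hX, i00, i11, i22,
    i01, i10, i02, i20, i12, i21, iX0, iX1, iX2, i0X, i1X, i2X,
    mul_one, mul_zero, zero_mul, one_mul, neg_zero, add_zero, zero_add, sub_zero,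
    zero_sub, mul_neg, neg_mul, sub_neg_eq_add] at C21
  have C22 := hcomp1 (I 2 X) X X (I 2 X)
  simp only [Fin.sum_univ_three, hsq', c01, c02, c10, c12, c20, c21, map_neg,
    LinearMap.neg_apply, inner_neg_left, inner_neg_right, neg_neg, hX, i00, i11, i22,
    i01, i10, i02, i20, i12, i21, iX0, iX1, iX2, i0X, i1X, i2X,
    mul_one, mul_zero, zero_mul, one_mul, neg_zero, add_zero, zero_add, sub_zero,
    zero_sub, mul_neg, neg_mul, sub_neg_eq_add] at C22
  have C23 := hcomp1 (I 2 X) X (I 0 X) (I 1 X)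
  simp only [Fin.sum_univ_three, hsq', c01, c02, c10, c12, c20, c21, map_neg,
    LinearMap.neg_apply, inner_neg_left, inner_neg_right, neg_neg, hX, i00, i11, i22,
    i01, i10, i02, i20, i12, i21, iX0, iX1, iX2, i0X, i1X, i2X,
    mul_one, mul_zero, zero_mul, one_mul, neg_zero, add_zero, zero_add, sub_zero,
    zero_sub, mul_neg, neg_mul, sub_neg_eq_add] at C23
  have C24 := hcomp1 (I 2 X) (I 0 X) X (I 1 X)
  simp only [Fin.sum_univ_three, hsq', c01, c02, c10, c12, c20, c21, map_neg,
    LinearMap.neg_apply, inner_neg_left, inner_neg_right, neg_neg, hX, i00, i11, i22,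
    i01, i10, i02, i20, i12, i21, iX0, iX1, iX2, i0X, i1X, i2X,
    mul_one, mul_zero, zero_mul, one_mul, neg_zero, add_zero, zero_add, sub_zero,
    zero_sub, mul_neg, neg_mul, sub_neg_eq_add] at C24
  have C25 := hcomp1 (I 2 X) (I 1 X) X (I 0 X)
  simp only [Fin.sum_univ_three, hsq', c01, c02, c10, c12, c20, c21, map_neg,
    LinearMap.neg_apply, inner_neg_left, inner_neg_right, neg_neg, hX, i00, i11, i22,
    i01, i10, i02, i20, i12, i21, iX0, iX1, iX2, i0X, i1X, i2X,
    mul_one, mul_zero, zero_mul, one_mul, neg_zero, add_zero, zero_add, sub_zero,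
    zero_sub, mul_neg, neg_mul, sub_neg_eq_add] at C25
  have C26 := hcomp1 (I 2 X) (I 2 X) X X
  simp only [Fin.sum_univ_three, hsq', c01, c02, c10, c12, c20, c21, map_neg,
    LinearMap.neg_apply, inner_neg_left, inner_neg_right, neg_neg, hX, i00, i11, i22,
    i01, i10, i02, i20, i12, i21, iX0, iX1, iX2, i0X, i1X, i2X,
    mul_one, mul_zero, zero_mul, one_mul, neg_zero, add_zero, zero_add, sub_zero,
    zero_sub, mul_neg, neg_mul, sub_neg_eq_add] at C26
  have B0 := hBianchi (I 0 X) (I 1 X) (I 2 X) X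
  simp only [Fin.sum_univ_three, hsq', c01, c02, c10, c12, c20, c21, map_neg,
    LinearMap.neg_apply, inner_neg_left, inner_neg_right, neg_neg, hX, i00, i11, i22,
    i01, i10, i02, i20, i12, i21, iX0, iX1, iX2, i0X, i1X, i2X,
    mul_one, mul_zero, zero_mul, one_mul, neg_zero, add_zero, zero_add, sub_zero,
    zero_sub, mul_neg, neg_mul, sub_neg_eq_add] at B0
  simp only [Fin.sum_univ_three]
  have hRn : ∀ v a b c : H, R (-v) a b c = -(R v a b c) := by
    intro v a b c
    have h1 : R (-v) + R v = 0 := by rw [← map_add, neg_add_cancel, map_zero]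
    have h2 := congrArg (fun f => f a b c) h1
    simp only [LinearMap.add_apply, LinearMap.zero_apply] at h2
    linarith
  simp only [hRn, neg_neg] at C8 C9 C10 C11 C12 C13 C14 C15 C16 C17 C18 C19 C20 C21 C22 C23 C24 C25 C26
  linarith [C0, C1, C2, C3, C4, C5, C6, C7, C8, C9, C10, C11, C12, C13, C14, C15, C16, C17, C18, C19, C20, C21, C22, C23, C24, C25, C26, B0, hT0sym X (I 0 X), hUsym X (I 0 X), hT0sym X (I 1 X), hUsym X (I 1 X), hT0sym X (I 2 X), hUsym X (I 2 X), hT0sym (I 0 X) (I 1 X), hUsym (I 0 X) (I 1 X), hT0sym (I 0 X) (I 2 X), hUsym (I 0 X) (I 2 X), hT0sym (I 1 X) (I 2 X), hUsym (I 1 X) (I 2 X)]
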